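/- Let T ⊂ ℝ² be a curved triangle with apex x₀, star-convex with respect to x₀, whose curved side is a C¹ curve c : [0,1] → ℝ² traversed counterclockwise, and suppose the map φ(ξ,t) = x₀ + ξ(c(t)-x₀) is injective on (0,1]×[0,1] onto T \ {x₀}. Then for any continuous integrable f : T → ℝ, ∫_T f(x) dx = ∫₀¹∫₀¹ f(φ(ξ,t)) · ξ · ((c(t)-x₀)·c'⊥(t)) dξ dt. -/

import Mathlib

open MeasureTheory

/-- Dot product in the plane. -/
def dot2 (a b : ℝ × ℝ) : ℝ := a.1 * b.1 + a.2 * b.2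

/-- Rotation of a planar vector by `-π/2`. -/
def perp2 (v : ℝ × ℝ) : ℝ × ℝ := (v.2, -v.1)

/-- The scaled boundary cubature change-of-variables formula over a curved
triangle `T` with apex `x₀`, star-convex with respect to `x₀`, whose curved
side is a `C¹` curve `c` traversed counterclockwise (nonnegative Jacobian
factor), with `φ(ξ,t) = x₀ + ξ(c(t)-x₀)` injective on `(0,1] × [0,1]` onto
`T \ {x₀}`:  `∫_T f = ∫₀¹∫₀¹ f(φ(ξ,t)) ξ ((c(t)-x₀)·c'⊥(t)) dξ dt`. -/
noncomputable def sbcJ (a b : ℝ × ℝ) : ℝ × ℝ →L[ℝ] ℝ × ℝ :=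
  (ContinuousLinearMap.fst ℝ ℝ ℝ).smulRight a + (ContinuousLinearMap.snd ℝ ℝ ℝ).smulRight b

lemma sbcJ_det (a b : ℝ × ℝ) : (sbcJ a b).det = a.1 * b.2 - b.1 * a.2 := by
  rw [ContinuousLinearMap.det, ← LinearMap.det_toMatrix (Module.Basis.finTwoProd ℝ), Matrix.det_fin_two]
  simp [LinearMap.toMatrix_apply, sbcJ, Module.Basis.coe_finTwoProd_repr, Module.Basis.finTwoProd_zero,
    Module.Basis.finTwoProd_one]

lemma sbc_hasFDerivAt (x₀ : ℝ × ℝ) (c : ℝ → ℝ × ℝ) (hc : ContDiff ℝ 1 c) (p : ℝ × ℝ) :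
    HasFDerivAt (fun p : ℝ × ℝ => x₀ + p.1 • (c p.2 - x₀))
      (sbcJ (c p.2 - x₀) (p.1 • deriv c p.2)) p := by
  have hd : HasFDerivAt (fun p : ℝ × ℝ => c p.2 - x₀)
      (((1 : ℝ →L[ℝ] ℝ).smulRight (deriv c p.2)).comp (ContinuousLinearMap.snd ℝ ℝ ℝ)) p :=
    (((hc.differentiable one_ne_zero p.2).hasDerivAt.hasFDerivAt).comp p hasFDerivAt_snd).sub_const x₀
  have h1 : HasFDerivAt (fun p : ℝ × ℝ => p.1) (ContinuousLinearMap.fst ℝ ℝ ℝ) p := hasFDerivAt_fst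
  have := (h1.smul hd).const_add x₀
  refine this.congr_fderiv ?_
  ext q <;> simp [sbcJ, mul_comm, smul_smul]

theorem sbc_change_of_variables
    (T : Set (ℝ × ℝ)) (x₀ : ℝ × ℝ) (c : ℝ → ℝ × ℝ) (f : ℝ × ℝ → ℝ)
    (hTmeas : MeasurableSet T)
    (hstar : StarConvex ℝ x₀ T)
    (hc : ContDiff ℝ 1 c)
    (hccw : ∀ t ∈ Set.Icc (0:ℝ) 1, 0 ≤ dot2 (c t - x₀) (perp2 (deriv c t)))
    (hinj : Set.InjOn (fun p : ℝ × ℝ => x₀ + p.1 • (c p.2 - x₀))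
      (Set.Ioc (0:ℝ) 1 ×ˢ Set.Icc (0:ℝ) 1))
    (himage : (fun p : ℝ × ℝ => x₀ + p.1 • (c p.2 - x₀)) ''
      (Set.Ioc (0:ℝ) 1 ×ˢ Set.Icc (0:ℝ) 1) = T \ {x₀})
    (hf : ContinuousOn f T)
    (hint : IntegrableOn f T volume) :
    ∫ x in T, f x =
      ∫ t in (0:ℝ)..1, ∫ ξ in (0:ℝ)..1,
        f (x₀ + ξ • (c t - x₀)) * ξ * dot2 (c t - x₀) (perp2 (deriv c t)) := by
  set φ : ℝ × ℝ → ℝ × ℝ := fun p => x₀ + p.1 • (c p.2 - x₀) with hφ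
  set s : Set (ℝ × ℝ) := Set.Ioc (0:ℝ) 1 ×ˢ Set.Icc (0:ℝ) 1 with hs
  have hsm : MeasurableSet s := measurableSet_Ioc.prod measurableSet_Icc
  set F' : ℝ × ℝ → (ℝ × ℝ →L[ℝ] ℝ × ℝ) := fun p => sbcJ (c p.2 - x₀) (p.1 • deriv c p.2) with hF'
  have hder : ∀ p ∈ s, HasFDerivWithinAt φ (F' p) s p := fun p _ =>
    (sbc_hasFDerivAt x₀ c hc p).hasFDerivWithinAt
  -- the Jacobian absolute determinant equals the positive quantity, on s
  have hdet : ∀ p ∈ s, |(F' p).det| =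
      p.1 * dot2 (c p.2 - x₀) (perp2 (deriv c p.2)) := by
    rintro ⟨ξ, t⟩ ⟨hξ, ht⟩
    have h0 : (F' (ξ, t)).det = ξ * dot2 (c t - x₀) (perp2 (deriv c t)) := by
      rw [hF', sbcJ_det]
      simp [dot2, perp2, Prod.smul_fst, Prod.smul_snd]
      ring
    rw [h0, abs_of_nonneg (mul_nonneg (le_of_lt hξ.1) (hccw t ht))]
  -- integrability of f on T \ {x₀}
  have hnull : volume ({x₀} : Set (ℝ × ℝ)) = 0 := measure_singleton x₀
  have hTd : (T \ {x₀} : Set (ℝ × ℝ)) =ᵐ[volume] T := by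
    apply MeasureTheory.diff_ae_eq_self.mpr
    exact measure_mono_null Set.inter_subset_right hnull
  have hint' : IntegrableOn f (T \ {x₀}) volume := hint.mono_set Set.diff_subset
  -- change of variables
  have hcov : ∫ x in φ '' s, f x = ∫ p in s, |(F' p).det| • f (φ p) :=
    integral_image_eq_integral_abs_det_fderiv_smul volume hsm hder hinj f
  have hintG : IntegrableOn (fun p => |(F' p).det| • f (φ p)) s volume := by
    rw [← integrableOn_image_iff_integrableOn_abs_det_fderiv_smul volume hsm hder hinj f,
      himage]
    exact hint'
  -- the integrand we want
  set G : ℝ × ℝ → ℝ := fun p =>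
    f (x₀ + p.1 • (c p.2 - x₀)) * p.1 * dot2 (c p.2 - x₀) (perp2 (deriv c p.2)) with hG
  have hGeq : ∀ p ∈ s, |(F' p).det| • f (φ p) = G p := by
    intro p hp
    rw [hdet p hp]
    simp only [hG, smul_eq_mul, hφ]
    ring
  have hintG' : IntegrableOn G s volume := by
    apply hintG.congr_fun hGeq hsm
  have h1 : ∫ x in T, f x = ∫ p in s, G p := by
    rw [← setIntegral_congr_set hTd, ← himage, hcov]
    exact setIntegral_congr_fun hsm hGeq
  rw [h1]
  -- Fubini
  have hprod : ∫ p in s, G p = ∫ t in Set.Icc (0:ℝ) 1, ∫ ξ in Set.Ioc (0:ℝ) 1, G (ξ, t) := by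
    rw [hs, Measure.volume_eq_prod, ← Measure.prod_restrict]
    apply integral_prod_symm
    rw [Measure.prod_restrict, ← Measure.volume_eq_prod]
    exact hintG'
  rw [hprod]
  rw [show (Set.Icc (0:ℝ) 1) = Set.Icc 0 1 from rfl]
  rw [← Measure.restrict_congr_set Ioc_ae_eq_Icc]
  rw [intervalIntegral.integral_of_le (by norm_num : (0:ℝ) ≤ 1)]
  congr 1
  ext t
  rw [intervalIntegral.integral_of_le (by norm_num : (0:ℝ) ≤ 1)]
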